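/- Let A be a symmetric p×p real matrix, G a symmetric q×q real matrix, and C a p×q real matrix with A*C = C*G, C*Cᵀ = 1 + R_A and Cᵀ*C = 1 + R_D for matrices R_A, R_D. If v is a nonzero vector with A*v = λ*v and R_A*v = v (an even eigenvector), then Cᵀ*v ≠ 0, G*(Cᵀ*v) = λ*(Cᵀ*v), and R_D*(Cᵀ*v) = Cᵀ*v; in particular λ is an eigenvalue of G with an even eigenvector. -/
import Mathlib


open Matrix

/-- Suppose `C` intertwines the symmetric real matrices `A` and `G`, with
`C*Cᵀ = 1 + R_A` and `Cᵀ*C = 1 + R_D`.  If `v` is a nonzero eigenvector of `A`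
with eigenvalue `λ` that is even under `R_A`, then `Cᵀ*v` is nonzero, is an
eigenvector of `G` with the same eigenvalue `λ`, and is even under `R_D`. -/
theorem even_eigenvector_transfers {p q : ℕ}
    (A : Matrix (Fin p) (Fin p) ℝ) (G : Matrix (Fin q) (Fin q) ℝ)
    (C : Matrix (Fin p) (Fin q) ℝ)
    (RA : Matrix (Fin p) (Fin p) ℝ) (RD : Matrix (Fin q) (Fin q) ℝ)
    (hA : Aᵀ = A) (hG : Gᵀ = G)
    (h : A * C = C * G)
    (h1 : C * Cᵀ = 1 + RA) (h2 : Cᵀ * C = 1 + RD)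
    (lam : ℝ) (v : Fin p → ℝ) (hv : v ≠ 0)
    (heig : A.mulVec v = lam • v) (heven : RA.mulVec v = v) :
    Cᵀ.mulVec v ≠ 0 ∧
      G.mulVec (Cᵀ.mulVec v) = lam • (Cᵀ.mulVec v) ∧
      RD.mulVec (Cᵀ.mulVec v) = Cᵀ.mulVec v := by
  have hCCT : C.mulVec (Cᵀ.mulVec v) = v + v := by
    rw [mulVec_mulVec, h1, add_mulVec, one_mulVec, heven]
  refine ⟨?_, ?_, ?_⟩
  · intro hw
    apply hv
    have := hCCT
    rw [hw, mulVec_zero] at this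
    have : (2 : ℝ) • v = 0 := by rw [two_smul]; exact this.symm
    simpa [two_ne_zero] using smul_eq_zero.mp this
  · have hcomm : G * Cᵀ = Cᵀ * A := by
      have := congrArg Matrix.transpose h
      rw [transpose_mul, transpose_mul, hA, hG] at this
      exact this.symm
    rw [mulVec_mulVec, hcomm, ← mulVec_mulVec, heig, mulVec_smul]
  · have : (Cᵀ * C).mulVec (Cᵀ.mulVec v) = Cᵀ.mulVec v + Cᵀ.mulVec v := by
      rw [mulVec_mulVec, Matrix.mul_assoc, ← mulVec_mulVec, ← mulVec_mulVec, hCCT, mulVec_add]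
    rw [h2, add_mulVec, one_mulVec] at this
    exact add_left_cancel this
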